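/- Let α > 0 and set z_d = (1-√(1+α²))/2, t_d = (z_d + iα/2)/((1+iα)z_d), τ = t - t_d, and let ψ(t) = log(t(1 - z_d t)) - (1-iα)log(t-1). Then the third-order Taylor coefficient of ψ(t) - ψ(t_d) in τ, namely ψ'''(t_d)/6, equals A = -((1+iα)³/(6α²√(1+α²)))·{α²(-3+√(1+α²)) + 4(-1+√(1+α²))}, and A ≠ 0. -/

import Mathlib

set_option maxHeartbeats 1000000

open Complex

/-- The third-order Taylor coefficient `ψ'''(t_d)/6` of
`ψ(t) = log(t(1 - z_d t)) - (1-iα) log(t-1)` at the double saddle `t_d` equals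
`A = -((1+iα)³/(6α²√(1+α²)))·{α²(-3+√(1+α²)) + 4(-1+√(1+α²))}`, and `A ≠ 0`. -/
theorem stmt7 (α : ℝ) (hα : 0 < α) :
    let s : ℂ := (Real.sqrt (1 + α ^ 2) : ℂ)
    let zd : ℂ := (1 - s) / 2
    let td : ℂ := (zd + I * α / 2) / ((1 + I * α) * zd)
    let A : ℂ := -((1 + I * α) ^ 3 / (6 * (α : ℂ) ^ 2 * s)) *
      ((α : ℂ) ^ 2 * (-3 + s) + 4 * (-1 + s))
    iteratedDeriv 3
        (fun t : ℂ => Complex.log (t * (1 - zd * t)) - (1 - I * α) * Complex.log (t - 1))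
        td / 6 = A ∧ A ≠ 0 := by
  intro s zd td A
  have hA_eq : A = -((1 + I * α) ^ 3 / (6 * (α : ℂ) ^ 2 * s)) *
      ((α : ℂ) ^ 2 * (-3 + s) + 4 * (-1 + s)) := rfl
  have htd_eq : td = (zd + I * α / 2) / ((1 + I * α) * zd) := rfl
  have hzd_eq : zd = (1 - s) / 2 := rfl
  clear_value A td zd
  set r : ℝ := Real.sqrt (1 + α ^ 2) with hrdef
  have hr2 : r ^ 2 = 1 + α ^ 2 := Real.sq_sqrt (by positivity)
  have hr1 : 1 < r := by nlinarith [Real.sqrt_nonneg (1 + α ^ 2)]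
  have hr0 : 0 < r := lt_trans one_pos hr1
  have hs : s = (r : ℂ) := rfl
  clear_value s
  have hs2C : (r : ℂ) ^ 2 = 1 + (α : ℂ) ^ 2 := by exact_mod_cast congrArg Complex.ofReal hr2
  have hrne : (r : ℂ) ≠ 0 := by exact_mod_cast hr0.ne'
  have hrm1 : (r : ℂ) - 1 ≠ 0 := by
    have h : ((r - 1 : ℝ) : ℂ) ≠ 0 := by exact_mod_cast (sub_pos.mpr hr1).ne'
    push_cast at h; exact h
  have hαne : (α : ℂ) ≠ 0 := by exact_mod_cast hα.ne'
  have hzd : zd ≠ 0 := by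
    simp only [hzd_eq, hs, div_ne_zero_iff]
    refine ⟨fun h => hrm1 (by linear_combination -h), by norm_num⟩
  have hIα : (1 : ℂ) + I * α ≠ 0 := by
    intro h
    have h2 := congrArg Complex.im h
    simp at h2
    exact hα.ne' h2
  have hD : (1 + I * (α : ℂ)) * zd ≠ 0 := mul_ne_zero hIα hzd
  set n1 : ℂ := -(((r : ℂ) - 1) + I * α) with hn1def
  set d : ℂ := (r : ℂ) * ((r : ℂ) - 1) with hddef
  have hd : d ≠ 0 := mul_ne_zero hrne hrm1
  have v1 : td = n1 / d := by
    rw [htd_eq, div_eq_div_iff hD hd]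
    simp only [hzd_eq, hs, hn1def, hddef]
    linear_combination (((-1:ℂ)/2)*(r:ℂ) + ((1:ℂ)/2)) * hs2C +
      (((-1:ℂ)/2)*(r:ℂ)*(α:ℂ)^2 + ((1:ℂ)/2)*(α:ℂ)^2) * I_sq
  have v2 : 1 - zd * td = ((r : ℂ) + 1 - I * α) / (2 * r) := by
    rw [v1, show (1:ℂ) - zd * (n1 / d) = (d - zd * n1) / d by field_simp,
      div_eq_div_iff hd (mul_ne_zero two_ne_zero hrne)]
    simp only [hzd_eq, hs, hn1def, hddef]
    ring
  have v3 : td - 1 = -((α : ℂ) ^ 2 + I * α) / d := by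
    rw [v1, div_sub_one hd, div_eq_div_iff hd hd]
    simp only [hn1def, hddef]
    linear_combination ((-1:ℂ)*(r:ℂ)^2 + (r:ℂ)) * hs2C
  have hn1 : n1 ≠ 0 := by
    intro h
    have h2 := congrArg Complex.im h
    simp [hn1def] at h2
    exact hα.ne' h2
  have hn2 : (r : ℂ) + 1 - I * α ≠ 0 := by
    intro h
    have h2 := congrArg Complex.im h
    simp at h2
    exact hα.ne' h2
  have hn3 : (α : ℂ) ^ 2 + I * α ≠ 0 := by
    have h5 : ((α : ℂ) ^ 2 + I * α).im = α := by
      simp [pow_two, Complex.mul_im]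
    exact fun h => hα.ne' (by rw [← h5, h]; simp)
  have him_td : td.im = -α / (r * (r - 1)) := by
    rw [v1, hddef, hn1def,
      show (r : ℂ) * ((r : ℂ) - 1) = ((r * (r - 1) : ℝ) : ℂ) by push_cast; ring,
      div_ofReal_im]
    simp
  have hy0 : -α / (r * (r - 1)) ≠ 0 :=
    div_ne_zero (by linarith) (by nlinarith)
  have htd_ne : td ≠ 0 := fun h => hy0 (by rw [← him_td, h]; simp)
  have him_sub : (td - 1).im = -α / (r * (r - 1)) := by rw [Complex.sub_im, him_td]; simp
  have hsub_ne : td - 1 ≠ 0 := fun h => hy0 (by rw [← him_sub, h]; simp)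
  have hone_ne : 1 - zd * td ≠ 0 := by
    rw [v2]
    exact div_ne_zero hn2 (mul_ne_zero two_ne_zero hrne)
  have him_h : (td * (1 - zd * td)).im ≠ 0 := by
    rw [v2, v1, div_mul_div_comm,
      show d * (2 * (r : ℂ)) = ((r * (r - 1) * (2 * r) : ℝ) : ℂ) by
        rw [hddef]; push_cast; ring,
      div_ofReal_im]
    have h5 : (n1 * ((r : ℂ) + 1 - I * α)).im = -2 * α := by
      simp [hn1def, Complex.mul_im, Complex.add_im, Complex.sub_im, Complex.mul_re]
      ring
    rw [h5]
    apply div_ne_zero (by nlinarith) (by nlinarith)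
  have him_sub_ne : (td - 1).im ≠ 0 := by rw [him_sub]; exact hy0
  set f : ℂ → ℂ := fun t => Complex.log (t * (1 - zd * t)) - (1 - I * α) * Complex.log (t - 1)
    with hfdef
  set g1 : ℂ → ℂ := fun t => 1 / t - zd / (1 - zd * t) - (1 - I * α) / (t - 1) with hg1def
  set g2 : ℂ → ℂ :=
    fun t => -(1 / t ^ 2) - zd ^ 2 / (1 - zd * t) ^ 2 + (1 - I * α) / (t - 1) ^ 2 with hg2def
  set g3 : ℂ → ℂ :=
    fun t => 2 / t ^ 3 - 2 * zd ^ 3 / (1 - zd * t) ^ 3 - 2 * (1 - I * α) / (t - 1) ^ 3 with hg3def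
  set U : Set ℂ := {t | (t * (1 - zd * t)).im ≠ 0} ∩ {t | (t - 1).im ≠ 0} with hUdef
  have hUopen : IsOpen U := by
    have c1 : Continuous fun t : ℂ => (t * (1 - zd * t)).im :=
      Complex.continuous_im.comp
        (continuous_id.mul (continuous_const.sub (continuous_const.mul continuous_id)))
    have c2 : Continuous fun t : ℂ => (t - 1).im :=
      Complex.continuous_im.comp (continuous_id.sub continuous_const)
    exact (isOpen_compl_singleton.preimage c1).inter (isOpen_compl_singleton.preimage c2)
  have htdU : td ∈ U := ⟨him_h, him_sub_ne⟩
  have hUne : ∀ t ∈ U, t ≠ 0 ∧ (1 - zd * t) ≠ 0 ∧ t - 1 ≠ 0 := by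
    intro t ht
    refine ⟨fun h => ht.1 (by rw [h, zero_mul, Complex.zero_im]),
      fun h => ht.1 (by rw [h, mul_zero, Complex.zero_im]),
      fun h => ht.2 (by rw [h, Complex.zero_im])⟩
  have hf' : ∀ t ∈ U, HasDerivAt f (g1 t) t := by
    intro t ht
    obtain ⟨ht0, ht1, ht2⟩ := hUne t ht
    have hmul : HasDerivAt (fun t : ℂ => t * (1 - zd * t))
        (1 * (1 - zd * t) + t * (0 - zd * 1)) t :=
      (hasDerivAt_id t).mul ((hasDerivAt_const t 1).sub ((hasDerivAt_id t).const_mul zd))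
    have hlog1 : HasDerivAt (fun t : ℂ => Complex.log (t * (1 - zd * t)))
        ((1 * (1 - zd * t) + t * (0 - zd * 1)) / (t * (1 - zd * t))) t :=
      hmul.clog (mem_slitPlane_iff.mpr (Or.inr ht.1))
    have hlog2 : HasDerivAt (fun t : ℂ => Complex.log (t - 1)) (1 / (t - 1)) t := by
      have h := ((hasDerivAt_id t).sub_const 1).clog (mem_slitPlane_iff.mpr (Or.inr ht.2))
      simpa using h
    have h := hlog1.sub (hlog2.const_mul (1 - I * (α : ℂ)))
    refine h.congr_deriv ?_
    simp only [hg1def]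
    field_simp <;> first | ring1 | tauto
  have hV : ∀ t : ℂ, t ≠ 0 → (1 - zd * t) ≠ 0 → t - 1 ≠ 0 → HasDerivAt g1 (g2 t) t := by
    intro t ht0 ht1 ht2
    have h1 : HasDerivAt (fun t : ℂ => 1 / t) (-(1 / t ^ 2)) t := by
      simpa using hasDerivAt_inv ht0
    have h2 : HasDerivAt (fun t : ℂ => zd / (1 - zd * t))
        ((0 * (1 - zd * t) - zd * (0 - zd * 1)) / (1 - zd * t) ^ 2) t :=
      (hasDerivAt_const t zd).div
        ((hasDerivAt_const t 1).sub ((hasDerivAt_id t).const_mul zd)) ht1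
    have h3 : HasDerivAt (fun t : ℂ => (1 - I * α) / (t - 1))
        ((0 * (t - 1) - (1 - I * α) * 1) / (t - 1) ^ 2) t :=
      (hasDerivAt_const t _).div ((hasDerivAt_id t).sub_const 1) ht2
    have h := (h1.sub h2).sub h3
    refine h.congr_deriv ?_
    simp only [hg2def]
    field_simp <;> first | ring1 | tauto
  have hW : ∀ t : ℂ, t ≠ 0 → (1 - zd * t) ≠ 0 → t - 1 ≠ 0 → HasDerivAt g2 (g3 t) t := by
    intro t ht0 ht1 ht2
    have h1 : HasDerivAt (fun t : ℂ => 1 / t ^ 2)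
        ((0 * t ^ 2 - 1 * ((2 : ℕ) * t ^ (2 - 1) * 1)) / (t ^ 2) ^ 2) t :=
      (hasDerivAt_const t 1).div ((hasDerivAt_id t).pow 2) (pow_ne_zero 2 ht0)
    have h2 : HasDerivAt (fun t : ℂ => zd ^ 2 / (1 - zd * t) ^ 2)
        ((0 * (1 - zd * t) ^ 2 - zd ^ 2 * ((2 : ℕ) * (1 - zd * t) ^ (2 - 1) * (0 - zd * 1))) /
          ((1 - zd * t) ^ 2) ^ 2) t :=
      (hasDerivAt_const t _).div
        (((hasDerivAt_const t 1).sub ((hasDerivAt_id t).const_mul zd)).pow 2)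
        (pow_ne_zero 2 ht1)
    have h3 : HasDerivAt (fun t : ℂ => (1 - I * α) / (t - 1) ^ 2)
        ((0 * (t - 1) ^ 2 - (1 - I * α) * ((2 : ℕ) * (t - 1) ^ (2 - 1) * 1)) /
          ((t - 1) ^ 2) ^ 2) t :=
      (hasDerivAt_const t _).div (((hasDerivAt_id t).sub_const 1).pow 2) (pow_ne_zero 2 ht2)
    have h := (h1.neg.sub h2).add h3
    refine h.congr_deriv ?_
    simp only [hg3def]
    push_cast
    field_simp <;> first | ring1 | tauto
  obtain ⟨htd0, htd1, htd2⟩ := hUne td htdU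
  have hdf : deriv f =ᶠ[nhds td] g1 := by
    filter_upwards [hUopen.mem_nhds htdU] with t ht using (hf' t ht).deriv
  have hVopen : IsOpen {t : ℂ | t ≠ 0 ∧ (1 - zd * t) ≠ 0 ∧ t - 1 ≠ 0} := by
    have e1 : IsOpen {t : ℂ | t ≠ 0} := isOpen_compl_singleton
    have e2 : IsOpen {t : ℂ | (1 - zd * t) ≠ 0} :=
      isOpen_compl_singleton.preimage (continuous_const.sub (continuous_const.mul continuous_id))
    have e3 : IsOpen {t : ℂ | t - 1 ≠ 0} :=
      isOpen_compl_singleton.preimage (continuous_id.sub continuous_const)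
    exact (e1.inter (e2.inter e3))
  have htdV : td ∈ {t : ℂ | t ≠ 0 ∧ (1 - zd * t) ≠ 0 ∧ t - 1 ≠ 0} := ⟨htd0, htd1, htd2⟩
  have hdg1 : deriv g1 =ᶠ[nhds td] g2 := by
    filter_upwards [hVopen.mem_nhds htdV] with t ht using (hV t ht.1 ht.2.1 ht.2.2).deriv
  have hthird : iteratedDeriv 3 f td = g3 td := by
    rw [show (3 : ℕ) = 2 + 1 from rfl, iteratedDeriv_succ,
      show (2 : ℕ) = 1 + 1 from rfl, iteratedDeriv_succ, iteratedDeriv_one]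
    have e1 : deriv (deriv f) =ᶠ[nhds td] g2 := hdf.deriv.trans hdg1
    rw [e1.deriv_eq]
    exact (hW td htd0 htd1 htd2).deriv
  have hn3' : -((α : ℂ) ^ 2 + I * α) ≠ 0 := neg_ne_zero.mpr hn3
  have hA6 : 6 * A = -((1 + I * α) ^ 3 * ((r : ℂ) - 1) ^ 3) / ((α : ℂ) ^ 2 * r) := by
    simp only [hA_eq, hs]
    rw [show (α : ℂ) ^ 2 * (-3 + (r : ℂ)) + 4 * (-1 + (r : ℂ)) = ((r : ℂ) - 1) ^ 3 by
      linear_combination ((3 : ℂ) - (r : ℂ)) * hs2C]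
    field_simp <;> first | ring1 | tauto
  have hkey : g3 td = 6 * A := by
    simp only [hg3def]
    rw [v2, v3, v1]
    rw [div_pow, div_pow, div_pow, div_div_eq_mul_div, div_div_eq_mul_div, div_div_eq_mul_div]
    rw [div_sub_div _ _ (pow_ne_zero 3 hn1) (pow_ne_zero 3 hn2),
      div_sub_div _ _ (mul_ne_zero (pow_ne_zero 3 hn1) (pow_ne_zero 3 hn2)) (pow_ne_zero 3 hn3')]
    rw [hA6, div_eq_div_iff
      (mul_ne_zero (mul_ne_zero (pow_ne_zero 3 hn1) (pow_ne_zero 3 hn2)) (pow_ne_zero 3 hn3'))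
      (mul_ne_zero (pow_ne_zero 2 hαne) hrne)]
    simp only [hzd_eq, hs, hn1def, hddef]
    linear_combination ((-2:ℂ)*(r:ℂ)^11*(α:ℂ)^3*I + (2:ℂ)*(r:ℂ)^11*(α:ℂ)^2 + (6:ℂ)*(r:ℂ)^10*(α:ℂ)^3*I + (-6:ℂ)*(r:ℂ)^10*(α:ℂ)^2 + (-8:ℂ)*(r:ℂ)^9*(α:ℂ)^5*I + (20:ℂ)*(r:ℂ)^9*(α:ℂ)^4 + (10:ℂ)*(r:ℂ)^9*(α:ℂ)^3*I + (2:ℂ)*(r:ℂ)^9*(α:ℂ)^2 + (24:ℂ)*(r:ℂ)^8*(α:ℂ)^5*I + (-60:ℂ)*(r:ℂ)^8*(α:ℂ)^4 + (-46:ℂ)*(r:ℂ)^8*(α:ℂ)^3*I + (10:ℂ)*(r:ℂ)^8*(α:ℂ)^2 + (11:ℂ)*(r:ℂ)^7*(α:ℂ)^9*I + (-48:ℂ)*(r:ℂ)^7*(α:ℂ)^8 + (-89:ℂ)*(r:ℂ)^7*(α:ℂ)^7*I + (98:ℂ)*(r:ℂ)^7*(α:ℂ)^6 + (53:ℂ)*(r:ℂ)^7*(α:ℂ)^5*I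 + (16:ℂ)*(r:ℂ)^7*(α:ℂ)^4 + (33:ℂ)*(r:ℂ)^7*(α:ℂ)^3*I + (-10:ℂ)*(r:ℂ)^7*(α:ℂ)^2 + (-33:ℂ)*(r:ℂ)^6*(α:ℂ)^9*I + (144:ℂ)*(r:ℂ)^6*(α:ℂ)^8 + (267:ℂ)*(r:ℂ)^6*(α:ℂ)^7*I + (-294:ℂ)*(r:ℂ)^6*(α:ℂ)^6 + (-223:ℂ)*(r:ℂ)^6*(α:ℂ)^5*I + (112:ℂ)*(r:ℂ)^6*(α:ℂ)^4 + (29:ℂ)*(r:ℂ)^6*(α:ℂ)^3*I + (-2:ℂ)*(r:ℂ)^6*(α:ℂ)^2 + (4:ℂ)*(r:ℂ)^5*(α:ℂ)^11*I + (-18:ℂ)*(r:ℂ)^5*(α:ℂ)^10 + (7:ℂ)*(r:ℂ)^5*(α:ℂ)^9*I + (-142:ℂ)*(r:ℂ)^5*(α:ℂ)^8 + (-297:ℂ)*(r:ℂ)^5*(α:ℂ)^7*I + (320:ℂ)*(r:ℂ)^5*(α:ℂ)^6 + (233:ℂ)*(r:ℂ)^5*(α:ℂ)^5*I + (-126:ℂ)*(r:ℂ)^5*(α:ℂ)^4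 + (-43:ℂ)*(r:ℂ)^5*(α:ℂ)^3*I + (6:ℂ)*(r:ℂ)^5*(α:ℂ)^2 + (-12:ℂ)*(r:ℂ)^4*(α:ℂ)^11*I + (54:ℂ)*(r:ℂ)^4*(α:ℂ)^10 + (67:ℂ)*(r:ℂ)^4*(α:ℂ)^9*I + (42:ℂ)*(r:ℂ)^4*(α:ℂ)^8 + (179:ℂ)*(r:ℂ)^4*(α:ℂ)^7*I + (-176:ℂ)*(r:ℂ)^4*(α:ℂ)^6 + (-83:ℂ)*(r:ℂ)^4*(α:ℂ)^5*I + (26:ℂ)*(r:ℂ)^4*(α:ℂ)^4 + (9:ℂ)*(r:ℂ)^4*(α:ℂ)^3*I + (-2:ℂ)*(r:ℂ)^4*(α:ℂ)^2 + (r:ℂ)^3*(α:ℂ)^13*I + (-6:ℂ)*(r:ℂ)^3*(α:ℂ)^12 + (-1:ℂ)*(r:ℂ)^3*(α:ℂ)^11*I + (-46:ℂ)*(r:ℂ)^3*(α:ℂ)^10 + (-92:ℂ)*(r:ℂ)^3*(α:ℂ)^9*I + (34:ℂ)*(r:ℂ)^3*(α:ℂ)^8 + (-76:ℂ)*(r:ℂ)^3*(α:ℂ)^7*I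 + (86:ℂ)*(r:ℂ)^3*(α:ℂ)^6 + (19:ℂ)*(r:ℂ)^3*(α:ℂ)^5*I + (12:ℂ)*(r:ℂ)^3*(α:ℂ)^4 + (5:ℂ)*(r:ℂ)^3*(α:ℂ)^3*I + (-3:ℂ)*(r:ℂ)^2*(α:ℂ)^13*I + (18:ℂ)*(r:ℂ)^2*(α:ℂ)^12 + (35:ℂ)*(r:ℂ)^2*(α:ℂ)^11*I + (-6:ℂ)*(r:ℂ)^2*(α:ℂ)^10 + (68:ℂ)*(r:ℂ)^2*(α:ℂ)^9*I + (-86:ℂ)*(r:ℂ)^2*(α:ℂ)^8 + (-12:ℂ)*(r:ℂ)^2*(α:ℂ)^7*I + (-50:ℂ)*(r:ℂ)^2*(α:ℂ)^6 + (-41:ℂ)*(r:ℂ)^2*(α:ℂ)^5*I + (12:ℂ)*(r:ℂ)^2*(α:ℂ)^4 + (r:ℂ)^2*(α:ℂ)^3*I + (3:ℂ)*(r:ℂ)*(α:ℂ)^13*I + (-18:ℂ)*(r:ℂ)*(α:ℂ)^12 + (-39:ℂ)*(r:ℂ)*(α:ℂ)^11*I + (24:ℂ)*(r:ℂ)*(α:ℂ)^10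 + (-42:ℂ)*(r:ℂ)*(α:ℂ)^9*I + (84:ℂ)*(r:ℂ)*(α:ℂ)^8 + (42:ℂ)*(r:ℂ)*(α:ℂ)^7*I + (24:ℂ)*(r:ℂ)*(α:ℂ)^6 + (39:ℂ)*(r:ℂ)*(α:ℂ)^5*I + (-18:ℂ)*(r:ℂ)*(α:ℂ)^4 + (-3:ℂ)*(r:ℂ)*(α:ℂ)^3*I + (-1:ℂ)*(α:ℂ)^13*I + (6:ℂ)*(α:ℂ)^12 + (13:ℂ)*(α:ℂ)^11*I + (-8:ℂ)*(α:ℂ)^10 + (14:ℂ)*(α:ℂ)^9*I + (-28:ℂ)*(α:ℂ)^8 + (-14:ℂ)*(α:ℂ)^7*I + (-8:ℂ)*(α:ℂ)^6 + (-13:ℂ)*(α:ℂ)^5*I + (6:ℂ)*(α:ℂ)^4 + (α:ℂ)^3*I) * hs2C + ((6:ℂ)*(r:ℂ)^11*(α:ℂ)^5*I + (-18:ℂ)*(r:ℂ)^11*(α:ℂ)^4 + (-18:ℂ)*(r:ℂ)^10*(α:ℂ)^5*I + (54:ℂ)*(r:ℂ)^10*(α:ℂ)^4 + (r:ℂ)^9*(α:ℂ)^9*I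 + (3:ℂ)*(r:ℂ)^9*(α:ℂ)^8*I^2 + (36:ℂ)*(r:ℂ)^9*(α:ℂ)^8 + (-3:ℂ)*(r:ℂ)^9*(α:ℂ)^7*I^3 + (48:ℂ)*(r:ℂ)^9*(α:ℂ)^7*I + (r:ℂ)^9*(α:ℂ)^6*I^4 + (50:ℂ)*(r:ℂ)^9*(α:ℂ)^6*I^2 + (-77:ℂ)*(r:ℂ)^9*(α:ℂ)^6 + (3:ℂ)*(r:ℂ)^9*(α:ℂ)^5*I^3 + (-48:ℂ)*(r:ℂ)^9*(α:ℂ)^5*I + (3:ℂ)*(r:ℂ)^9*(α:ℂ)^4*I^2 + (6:ℂ)*(r:ℂ)^9*(α:ℂ)^4 + (r:ℂ)^9*(α:ℂ)^3*I + (-3:ℂ)*(r:ℂ)^8*(α:ℂ)^9*I + (-9:ℂ)*(r:ℂ)^8*(α:ℂ)^8*I^2 + (-108:ℂ)*(r:ℂ)^8*(α:ℂ)^8 + (9:ℂ)*(r:ℂ)^8*(α:ℂ)^7*I^3 + (-144:ℂ)*(r:ℂ)^8*(α:ℂ)^7*I + (-3:ℂ)*(r:ℂ)^8*(α:ℂ)^6*I^4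 + (-150:ℂ)*(r:ℂ)^8*(α:ℂ)^6*I^2 + (231:ℂ)*(r:ℂ)^8*(α:ℂ)^6 + (-9:ℂ)*(r:ℂ)^8*(α:ℂ)^5*I^3 + (192:ℂ)*(r:ℂ)^8*(α:ℂ)^5*I + (-9:ℂ)*(r:ℂ)^8*(α:ℂ)^4*I^2 + (-162:ℂ)*(r:ℂ)^8*(α:ℂ)^4 + (-3:ℂ)*(r:ℂ)^8*(α:ℂ)^3*I + (-3:ℂ)*(r:ℂ)^7*(α:ℂ)^11*I^3 + (7:ℂ)*(r:ℂ)^7*(α:ℂ)^11*I + (-9:ℂ)*(r:ℂ)^7*(α:ℂ)^10*I^4 + (18:ℂ)*(r:ℂ)^7*(α:ℂ)^10*I^2 + (-30:ℂ)*(r:ℂ)^7*(α:ℂ)^10 + (-7:ℂ)*(r:ℂ)^7*(α:ℂ)^9*I^5 + (10:ℂ)*(r:ℂ)^7*(α:ℂ)^9*I^3 + (-37:ℂ)*(r:ℂ)^7*(α:ℂ)^9*I + (-3:ℂ)*(r:ℂ)^7*(α:ℂ)^8*I^6 + (-16:ℂ)*(r:ℂ)^7*(α:ℂ)^8*I^4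 + (7:ℂ)*(r:ℂ)^7*(α:ℂ)^8*I^2 + (152:ℂ)*(r:ℂ)^7*(α:ℂ)^8 + (-3:ℂ)*(r:ℂ)^7*(α:ℂ)^7*I^5 + (42:ℂ)*(r:ℂ)^7*(α:ℂ)^7*I^3 + (147:ℂ)*(r:ℂ)^7*(α:ℂ)^7*I + (9:ℂ)*(r:ℂ)^7*(α:ℂ)^6*I^4 + (104:ℂ)*(r:ℂ)^7*(α:ℂ)^6*I^2 + (-206:ℂ)*(r:ℂ)^7*(α:ℂ)^6 + (15:ℂ)*(r:ℂ)^7*(α:ℂ)^5*I^3 + (-147:ℂ)*(r:ℂ)^7*(α:ℂ)^5*I + (6:ℂ)*(r:ℂ)^7*(α:ℂ)^4*I^2 + (132:ℂ)*(r:ℂ)^7*(α:ℂ)^4 + (9:ℂ)*(r:ℂ)^6*(α:ℂ)^11*I^3 + (-21:ℂ)*(r:ℂ)^6*(α:ℂ)^11*I + (27:ℂ)*(r:ℂ)^6*(α:ℂ)^10*I^4 + (-54:ℂ)*(r:ℂ)^6*(α:ℂ)^10*I^2 + (90:ℂ)*(r:ℂ)^6*(α:ℂ)^10 + (21:ℂ)*(r:ℂ)^6*(α:ℂ)^9*I^5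 + (-30:ℂ)*(r:ℂ)^6*(α:ℂ)^9*I^3 + (119:ℂ)*(r:ℂ)^6*(α:ℂ)^9*I + (9:ℂ)*(r:ℂ)^6*(α:ℂ)^8*I^6 + (48:ℂ)*(r:ℂ)^6*(α:ℂ)^8*I^4 + (3:ℂ)*(r:ℂ)^6*(α:ℂ)^8*I^2 + (-168:ℂ)*(r:ℂ)^6*(α:ℂ)^8 + (9:ℂ)*(r:ℂ)^6*(α:ℂ)^7*I^5 + (-150:ℂ)*(r:ℂ)^6*(α:ℂ)^7*I^3 + (-57:ℂ)*(r:ℂ)^6*(α:ℂ)^7*I + (-19:ℂ)*(r:ℂ)^6*(α:ℂ)^6*I^4 + (88:ℂ)*(r:ℂ)^6*(α:ℂ)^6*I^2 + (2:ℂ)*(r:ℂ)^6*(α:ℂ)^6 + (-21:ℂ)*(r:ℂ)^6*(α:ℂ)^5*I^3 + (-87:ℂ)*(r:ℂ)^6*(α:ℂ)^5*I + (6:ℂ)*(r:ℂ)^6*(α:ℂ)^4*I^2 + (84:ℂ)*(r:ℂ)^6*(α:ℂ)^4 + (8:ℂ)*(r:ℂ)^6*(α:ℂ)^3*I + (3:ℂ)*(r:ℂ)^5*(α:ℂ)^13*I^5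 + (-3:ℂ)*(r:ℂ)^5*(α:ℂ)^13*I^3 + (3:ℂ)*(r:ℂ)^5*(α:ℂ)^13*I + (9:ℂ)*(r:ℂ)^5*(α:ℂ)^12*I^6 + (-12:ℂ)*(r:ℂ)^5*(α:ℂ)^12*I^4 + (12:ℂ)*(r:ℂ)^5*(α:ℂ)^12*I^2 + (-12:ℂ)*(r:ℂ)^5*(α:ℂ)^12 + (9:ℂ)*(r:ℂ)^5*(α:ℂ)^11*I^7 + (-18:ℂ)*(r:ℂ)^5*(α:ℂ)^11*I^5 + (12:ℂ)*(r:ℂ)^5*(α:ℂ)^11*I + (3:ℂ)*(r:ℂ)^5*(α:ℂ)^10*I^8 + (-12:ℂ)*(r:ℂ)^5*(α:ℂ)^10*I^6 + (-42:ℂ)*(r:ℂ)^5*(α:ℂ)^10*I^4 + (78:ℂ)*(r:ℂ)^5*(α:ℂ)^10*I^2 + (-114:ℂ)*(r:ℂ)^5*(α:ℂ)^10 + (-3:ℂ)*(r:ℂ)^5*(α:ℂ)^9*I^7 + (-45:ℂ)*(r:ℂ)^5*(α:ℂ)^9*I^5 + (81:ℂ)*(r:ℂ)^5*(α:ℂ)^9*I^3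 + (-162:ℂ)*(r:ℂ)^5*(α:ℂ)^9*I + (-18:ℂ)*(r:ℂ)^5*(α:ℂ)^8*I^6 + (-12:ℂ)*(r:ℂ)^5*(α:ℂ)^8*I^4 + (-15:ℂ)*(r:ℂ)^5*(α:ℂ)^8*I^2 + (132:ℂ)*(r:ℂ)^5*(α:ℂ)^8 + (171:ℂ)*(r:ℂ)^5*(α:ℂ)^7*I^3 + (-36:ℂ)*(r:ℂ)^5*(α:ℂ)^7*I + (27:ℂ)*(r:ℂ)^5*(α:ℂ)^6*I^4 + (-174:ℂ)*(r:ℂ)^5*(α:ℂ)^6*I^2 + (102:ℂ)*(r:ℂ)^5*(α:ℂ)^6 + (9:ℂ)*(r:ℂ)^5*(α:ℂ)^5*I^3 + (153:ℂ)*(r:ℂ)^5*(α:ℂ)^5*I + (-12:ℂ)*(r:ℂ)^5*(α:ℂ)^4*I^2 + (-132:ℂ)*(r:ℂ)^5*(α:ℂ)^4 + (-6:ℂ)*(r:ℂ)^5*(α:ℂ)^3*I + (-9:ℂ)*(r:ℂ)^4*(α:ℂ)^13*I^5 + (9:ℂ)*(r:ℂ)^4*(α:ℂ)^13*I^3 +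 (-9:ℂ)*(r:ℂ)^4*(α:ℂ)^13*I + (-27:ℂ)*(r:ℂ)^4*(α:ℂ)^12*I^6 + (36:ℂ)*(r:ℂ)^4*(α:ℂ)^12*I^4 + (-36:ℂ)*(r:ℂ)^4*(α:ℂ)^12*I^2 + (36:ℂ)*(r:ℂ)^4*(α:ℂ)^12 + (-27:ℂ)*(r:ℂ)^4*(α:ℂ)^11*I^7 + (54:ℂ)*(r:ℂ)^4*(α:ℂ)^11*I^5 + (-24:ℂ)*(r:ℂ)^4*(α:ℂ)^11*I^3 + (20:ℂ)*(r:ℂ)^4*(α:ℂ)^11*I + (-9:ℂ)*(r:ℂ)^4*(α:ℂ)^10*I^8 + (36:ℂ)*(r:ℂ)^4*(α:ℂ)^10*I^6 + (54:ℂ)*(r:ℂ)^4*(α:ℂ)^10*I^4 + (-90:ℂ)*(r:ℂ)^4*(α:ℂ)^10*I^2 + (102:ℂ)*(r:ℂ)^4*(α:ℂ)^10 + (9:ℂ)*(r:ℂ)^4*(α:ℂ)^9*I^7 + (79:ℂ)*(r:ℂ)^4*(α:ℂ)^9*I^5 + (-163:ℂ)*(r:ℂ)^4*(α:ℂ)^9*I^3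 + (166:ℂ)*(r:ℂ)^4*(α:ℂ)^9*I + (30:ℂ)*(r:ℂ)^4*(α:ℂ)^8*I^6 + (-92:ℂ)*(r:ℂ)^4*(α:ℂ)^8*I^4 + (29:ℂ)*(r:ℂ)^4*(α:ℂ)^8*I^2 + (-44:ℂ)*(r:ℂ)^4*(α:ℂ)^8 + (-24:ℂ)*(r:ℂ)^4*(α:ℂ)^7*I^5 + (-105:ℂ)*(r:ℂ)^4*(α:ℂ)^7*I^3 + (132:ℂ)*(r:ℂ)^4*(α:ℂ)^7*I + (-33:ℂ)*(r:ℂ)^4*(α:ℂ)^6*I^4 + (154:ℂ)*(r:ℂ)^4*(α:ℂ)^6*I^2 + (-106:ℂ)*(r:ℂ)^4*(α:ℂ)^6 + (21:ℂ)*(r:ℂ)^4*(α:ℂ)^5*I^3 + (-51:ℂ)*(r:ℂ)^4*(α:ℂ)^5*I + (12:ℂ)*(r:ℂ)^4*(α:ℂ)^4*I^2 + (12:ℂ)*(r:ℂ)^4*(α:ℂ)^4 + (-6:ℂ)*(r:ℂ)^4*(α:ℂ)^3*I + (-1:ℂ)*(r:ℂ)^3*(α:ℂ)^15*I^7 + (r:ℂ)^3*(α:ℂ)^15*I^5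 + (-1:ℂ)*(r:ℂ)^3*(α:ℂ)^15*I^3 + (r:ℂ)^3*(α:ℂ)^15*I + (-3:ℂ)*(r:ℂ)^3*(α:ℂ)^14*I^8 + (6:ℂ)*(r:ℂ)^3*(α:ℂ)^14*I^6 + (-6:ℂ)*(r:ℂ)^3*(α:ℂ)^14*I^4 + (6:ℂ)*(r:ℂ)^3*(α:ℂ)^14*I^2 + (-6:ℂ)*(r:ℂ)^3*(α:ℂ)^14 + (-3:ℂ)*(r:ℂ)^3*(α:ℂ)^13*I^9 + (12:ℂ)*(r:ℂ)^3*(α:ℂ)^13*I^7 + (-3:ℂ)*(r:ℂ)^3*(α:ℂ)^13*I^5 + (3:ℂ)*(r:ℂ)^3*(α:ℂ)^13*I^3 + (-3:ℂ)*(r:ℂ)^3*(α:ℂ)^13*I + (-1:ℂ)*(r:ℂ)^3*(α:ℂ)^12*I^10 + (10:ℂ)*(r:ℂ)^3*(α:ℂ)^12*I^8 + (17:ℂ)*(r:ℂ)^3*(α:ℂ)^12*I^6 + (-34:ℂ)*(r:ℂ)^3*(α:ℂ)^12*I^4 + (34:ℂ)*(r:ℂ)^3*(α:ℂ)^12*I^2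 + (-34:ℂ)*(r:ℂ)^3*(α:ℂ)^12 + (3:ℂ)*(r:ℂ)^3*(α:ℂ)^11*I^9 + (24:ℂ)*(r:ℂ)^3*(α:ℂ)^11*I^7 + (-75:ℂ)*(r:ℂ)^3*(α:ℂ)^11*I^5 + (54:ℂ)*(r:ℂ)^3*(α:ℂ)^11*I^3 + (-54:ℂ)*(r:ℂ)^3*(α:ℂ)^11*I + (9:ℂ)*(r:ℂ)^3*(α:ℂ)^10*I^8 + (-60:ℂ)*(r:ℂ)^3*(α:ℂ)^10*I^6 + (-3:ℂ)*(r:ℂ)^3*(α:ℂ)^10*I^4 + (36:ℂ)*(r:ℂ)^3*(α:ℂ)^10*I^2 + (-36:ℂ)*(r:ℂ)^3*(α:ℂ)^10 + (-17:ℂ)*(r:ℂ)^3*(α:ℂ)^9*I^7 + (-46:ℂ)*(r:ℂ)^3*(α:ℂ)^9*I^5 + (145:ℂ)*(r:ℂ)^3*(α:ℂ)^9*I^3 + (-126:ℂ)*(r:ℂ)^3*(α:ℂ)^9*I + (-21:ℂ)*(r:ℂ)^3*(α:ℂ)^8*I^6 + (120:ℂ)*(r:ℂ)^3*(α:ℂ)^8*I^4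 + (-63:ℂ)*(r:ℂ)^3*(α:ℂ)^8*I^2 + (36:ℂ)*(r:ℂ)^3*(α:ℂ)^8 + (33:ℂ)*(r:ℂ)^3*(α:ℂ)^7*I^5 + (24:ℂ)*(r:ℂ)^3*(α:ℂ)^7*I^3 + (-105:ℂ)*(r:ℂ)^3*(α:ℂ)^7*I + (19:ℂ)*(r:ℂ)^3*(α:ℂ)^6*I^4 + (-100:ℂ)*(r:ℂ)^3*(α:ℂ)^6*I^2 + (82:ℂ)*(r:ℂ)^3*(α:ℂ)^6 + (-27:ℂ)*(r:ℂ)^3*(α:ℂ)^5*I^3 + (9:ℂ)*(r:ℂ)^3*(α:ℂ)^5*I + (-6:ℂ)*(r:ℂ)^3*(α:ℂ)^4*I^2 + (30:ℂ)*(r:ℂ)^3*(α:ℂ)^4 + (8:ℂ)*(r:ℂ)^3*(α:ℂ)^3*I + (3:ℂ)*(r:ℂ)^2*(α:ℂ)^15*I^7 + (-3:ℂ)*(r:ℂ)^2*(α:ℂ)^15*I^5 + (3:ℂ)*(r:ℂ)^2*(α:ℂ)^15*I^3 + (-3:ℂ)*(r:ℂ)^2*(α:ℂ)^15*I + (9:ℂ)*(r:ℂ)^2*(α:ℂ)^14*I^8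 + (-18:ℂ)*(r:ℂ)^2*(α:ℂ)^14*I^6 + (18:ℂ)*(r:ℂ)^2*(α:ℂ)^14*I^4 + (-18:ℂ)*(r:ℂ)^2*(α:ℂ)^14*I^2 + (18:ℂ)*(r:ℂ)^2*(α:ℂ)^14 + (9:ℂ)*(r:ℂ)^2*(α:ℂ)^13*I^9 + (-36:ℂ)*(r:ℂ)^2*(α:ℂ)^13*I^7 + (33:ℂ)*(r:ℂ)^2*(α:ℂ)^13*I^5 + (-33:ℂ)*(r:ℂ)^2*(α:ℂ)^13*I^3 + (33:ℂ)*(r:ℂ)^2*(α:ℂ)^13*I + (3:ℂ)*(r:ℂ)^2*(α:ℂ)^12*I^10 + (-30:ℂ)*(r:ℂ)^2*(α:ℂ)^12*I^8 + (21:ℂ)*(r:ℂ)^2*(α:ℂ)^12*I^6 + (6:ℂ)*(r:ℂ)^2*(α:ℂ)^12*I^4 + (-6:ℂ)*(r:ℂ)^2*(α:ℂ)^12*I^2 + (6:ℂ)*(r:ℂ)^2*(α:ℂ)^12 + (-9:ℂ)*(r:ℂ)^2*(α:ℂ)^11*I^9 + (81:ℂ)*(r:ℂ)^2*(α:ℂ)^11*I^5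 + (-90:ℂ)*(r:ℂ)^2*(α:ℂ)^11*I^3 + (90:ℂ)*(r:ℂ)^2*(α:ℂ)^11*I + (-3:ℂ)*(r:ℂ)^2*(α:ℂ)^10*I^8 + (84:ℂ)*(r:ℂ)^2*(α:ℂ)^10*I^6 + (-111:ℂ)*(r:ℂ)^2*(α:ℂ)^10*I^4 + (84:ℂ)*(r:ℂ)^2*(α:ℂ)^10*I^2 + (-84:ℂ)*(r:ℂ)^2*(α:ℂ)^10 + (27:ℂ)*(r:ℂ)^2*(α:ℂ)^9*I^7 + (-54:ℂ)*(r:ℂ)^2*(α:ℂ)^9*I^5 + (-27:ℂ)*(r:ℂ)^2*(α:ℂ)^9*I^3 + (42:ℂ)*(r:ℂ)^2*(α:ℂ)^9*I + (-9:ℂ)*(r:ℂ)^2*(α:ℂ)^8*I^6 + (-72:ℂ)*(r:ℂ)^2*(α:ℂ)^8*I^4 + (117:ℂ)*(r:ℂ)^2*(α:ℂ)^8*I^2 + (-108:ℂ)*(r:ℂ)^2*(α:ℂ)^8 + (-27:ℂ)*(r:ℂ)^2*(α:ℂ)^7*I^5 + (72:ℂ)*(r:ℂ)^2*(α:ℂ)^7*I^3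 + (-45:ℂ)*(r:ℂ)^2*(α:ℂ)^7*I + (15:ℂ)*(r:ℂ)^2*(α:ℂ)^6*I^4 + (12:ℂ)*(r:ℂ)^2*(α:ℂ)^6*I^2 + (-30:ℂ)*(r:ℂ)^2*(α:ℂ)^6 + (9:ℂ)*(r:ℂ)^2*(α:ℂ)^5*I^3 + (-27:ℂ)*(r:ℂ)^2*(α:ℂ)^5*I + (-6:ℂ)*(r:ℂ)^2*(α:ℂ)^4*I^2 + (6:ℂ)*(r:ℂ)^2*(α:ℂ)^4 + (-3:ℂ)*(r:ℂ)*(α:ℂ)^15*I^7 + (3:ℂ)*(r:ℂ)*(α:ℂ)^15*I^5 + (-3:ℂ)*(r:ℂ)*(α:ℂ)^15*I^3 + (3:ℂ)*(r:ℂ)*(α:ℂ)^15*I + (-9:ℂ)*(r:ℂ)*(α:ℂ)^14*I^8 + (18:ℂ)*(r:ℂ)*(α:ℂ)^14*I^6 + (-18:ℂ)*(r:ℂ)*(α:ℂ)^14*I^4 + (18:ℂ)*(r:ℂ)*(α:ℂ)^14*I^2 + (-18:ℂ)*(r:ℂ)*(α:ℂ)^14 + (-9:ℂ)*(r:ℂ)*(α:ℂ)^13*I^9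 + (36:ℂ)*(r:ℂ)*(α:ℂ)^13*I^7 + (-36:ℂ)*(r:ℂ)*(α:ℂ)^13*I^5 + (36:ℂ)*(r:ℂ)*(α:ℂ)^13*I^3 + (-36:ℂ)*(r:ℂ)*(α:ℂ)^13*I + (-3:ℂ)*(r:ℂ)*(α:ℂ)^12*I^10 + (30:ℂ)*(r:ℂ)*(α:ℂ)^12*I^8 + (-30:ℂ)*(r:ℂ)*(α:ℂ)^12*I^6 + (6:ℂ)*(r:ℂ)*(α:ℂ)^12*I^4 + (-6:ℂ)*(r:ℂ)*(α:ℂ)^12*I^2 + (6:ℂ)*(r:ℂ)*(α:ℂ)^12 + (9:ℂ)*(r:ℂ)*(α:ℂ)^11*I^9 + (-9:ℂ)*(r:ℂ)*(α:ℂ)^11*I^7 + (-63:ℂ)*(r:ℂ)*(α:ℂ)^11*I^5 + (81:ℂ)*(r:ℂ)*(α:ℂ)^11*I^3 + (-81:ℂ)*(r:ℂ)*(α:ℂ)^11*I + (-72:ℂ)*(r:ℂ)*(α:ℂ)^10*I^6 + (126:ℂ)*(r:ℂ)*(α:ℂ)^10*I^4 + (-108:ℂ)*(r:ℂ)*(α:ℂ)^10*I^2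 + (108:ℂ)*(r:ℂ)*(α:ℂ)^10 + (-24:ℂ)*(r:ℂ)*(α:ℂ)^9*I^7 + (78:ℂ)*(r:ℂ)*(α:ℂ)^9*I^5 + (-24:ℂ)*(r:ℂ)*(α:ℂ)^9*I^3 + (18:ℂ)*(r:ℂ)*(α:ℂ)^8*I^6 + (36:ℂ)*(r:ℂ)*(α:ℂ)^8*I^4 + (-108:ℂ)*(r:ℂ)*(α:ℂ)^8*I^2 + (108:ℂ)*(r:ℂ)*(α:ℂ)^8 + (18:ℂ)*(r:ℂ)*(α:ℂ)^7*I^5 + (-90:ℂ)*(r:ℂ)*(α:ℂ)^7*I^3 + (90:ℂ)*(r:ℂ)*(α:ℂ)^7*I + (-24:ℂ)*(r:ℂ)*(α:ℂ)^6*I^4 + (24:ℂ)*(r:ℂ)*(α:ℂ)^6*I^2 + (3:ℂ)*(r:ℂ)*(α:ℂ)^6 + (27:ℂ)*(r:ℂ)*(α:ℂ)^5*I + (9:ℂ)*(r:ℂ)*(α:ℂ)^4*I^2 + (-18:ℂ)*(r:ℂ)*(α:ℂ)^4 + (-3:ℂ)*(r:ℂ)*(α:ℂ)^3*I + (α:ℂ)^15*I^7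 + (-1:ℂ)*(α:ℂ)^15*I^5 + (α:ℂ)^15*I^3 + (-1:ℂ)*(α:ℂ)^15*I + (3:ℂ)*(α:ℂ)^14*I^8 + (-6:ℂ)*(α:ℂ)^14*I^6 + (6:ℂ)*(α:ℂ)^14*I^4 + (-6:ℂ)*(α:ℂ)^14*I^2 + (6:ℂ)*(α:ℂ)^14 + (3:ℂ)*(α:ℂ)^13*I^9 + (-12:ℂ)*(α:ℂ)^13*I^7 + (12:ℂ)*(α:ℂ)^13*I^5 + (-12:ℂ)*(α:ℂ)^13*I^3 + (12:ℂ)*(α:ℂ)^13*I + (α:ℂ)^12*I^10 + (-10:ℂ)*(α:ℂ)^12*I^8 + (10:ℂ)*(α:ℂ)^12*I^6 + (-2:ℂ)*(α:ℂ)^12*I^4 + (2:ℂ)*(α:ℂ)^12*I^2 + (-2:ℂ)*(α:ℂ)^12 + (-3:ℂ)*(α:ℂ)^11*I^9 + (3:ℂ)*(α:ℂ)^11*I^7 + (21:ℂ)*(α:ℂ)^11*I^5 + (-27:ℂ)*(α:ℂ)^11*I^3 + (27:ℂ)*(α:ℂ)^11*I + (24:ℂ)*(α:ℂ)^10*I^6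 + (-42:ℂ)*(α:ℂ)^10*I^4 + (36:ℂ)*(α:ℂ)^10*I^2 + (-36:ℂ)*(α:ℂ)^10 + (8:ℂ)*(α:ℂ)^9*I^7 + (-26:ℂ)*(α:ℂ)^9*I^5 + (8:ℂ)*(α:ℂ)^9*I^3 + (-6:ℂ)*(α:ℂ)^8*I^6 + (-12:ℂ)*(α:ℂ)^8*I^4 + (36:ℂ)*(α:ℂ)^8*I^2 + (-36:ℂ)*(α:ℂ)^8 + (-6:ℂ)*(α:ℂ)^7*I^5 + (30:ℂ)*(α:ℂ)^7*I^3 + (-30:ℂ)*(α:ℂ)^7*I + (8:ℂ)*(α:ℂ)^6*I^4 + (-8:ℂ)*(α:ℂ)^6*I^2 + (-1:ℂ)*(α:ℂ)^6 + (-9:ℂ)*(α:ℂ)^5*I + (-3:ℂ)*(α:ℂ)^4*I^2 + (6:ℂ)*(α:ℂ)^4 + (α:ℂ)^3*I) * Complex.I_sq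
  have hAkey : A = -((1 + I * α) ^ 3 * ((r : ℂ) - 1) ^ 3) / (6 * (α : ℂ) ^ 2 * r) := by
    simp only [hA_eq, hs]
    rw [show (α : ℂ) ^ 2 * (-3 + (r : ℂ)) + 4 * (-1 + (r : ℂ)) = ((r : ℂ) - 1) ^ 3 by
      linear_combination ((3 : ℂ) - (r : ℂ)) * hs2C]
    ring
  have hAne : A ≠ 0 := by
    rw [hAkey]
    apply div_ne_zero
    · exact neg_ne_zero.mpr (mul_ne_zero (pow_ne_zero 3 hIα) (pow_ne_zero 3 hrm1))
    · exact mul_ne_zero (mul_ne_zero (by norm_num) (pow_ne_zero 2 hαne)) hrne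
  refine ⟨?_, hAne⟩
  rw [hthird, hkey]
  ring
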